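/- arXiv:1802.04420 — 4 statements merged into one kernel-verified Lean document; each statement's English description precedes it below -/
import Mathlib

section
/- Let M ∈ ℝ^{d×k} have SVD M = UΣV^T with U ∈ ℝ^{d×k}, Σ ∈ ℝ^{k×k} diagonal, V ∈ ℝ^{k×k}, satisfying U^TU = V^TV = VV^T = I. Define the gradient descent recursion w_1^{t+1} = w_1^t + αM^T w_2^t and w_2^{t+1} = w_2^t + αM w_1^t with initial vectors w_1^0 ∈ ℝ^k, w_2^0 ∈ ℝ^d. Then for all t ≥ 0: w_1^t = (1/2)V(Λ^{+,t} V^T w_1^0 + Λ^{-,t} U^T w_2^0) and w_2^t = (1/2)U(Λ^{-,t} V^T w_1^0 + Λ^{+,t} U^T w_2^0) - UU^T w_2^0 + w_2^0, where Λ^{+,t} = (I+αΣ)^t + (I-αΣ)^t and Λ^{-,t} = (I+αΣ)^t - (I-αΣ)^t. -/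
open Matrix

private theorem stmt_1_aux (d k : ℕ) (α : ℝ)
    (M : Matrix (Fin d) (Fin k) ℝ) (U : Matrix (Fin d) (Fin k) ℝ)
    (V S : Matrix (Fin k) (Fin k) ℝ)
    (hMT : Mᵀ = V * S * Uᵀ) (hM : M = U * S * Vᵀ)
    (hU : Uᵀ * U = 1) (hV : Vᵀ * V = 1) (hV' : V * Vᵀ = 1)
    (w1 : ℕ → Fin k → ℝ) (w2 : ℕ → Fin d → ℝ)
    (hrec1 : ∀ t : ℕ, w1 (t + 1) = w1 t + α • (Mᵀ *ᵥ w2 t))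
    (hrec2 : ∀ t : ℕ, w2 (t + 1) = w2 t + α • (M *ᵥ w1 t))
    (Lp Lm : ℕ → Matrix (Fin k) (Fin k) ℝ)
    (hLp0 : Lp 0 = 1 + 1) (hLm0 : Lm 0 = 0)
    (hLp : ∀ t, Lp (t + 1) = Lp t + α • (S * Lm t))
    (hLm : ∀ t, Lm (t + 1) = Lm t + α • (S * Lp t))
    (a0 : Fin k → ℝ) (b0 : Fin k → ℝ)
    (ha0 : a0 = Vᵀ *ᵥ w1 0) (hb0 : b0 = Uᵀ *ᵥ w2 0) :
    ∀ t : ℕ,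
      w1 t = (1 / 2 : ℝ) • (V *ᵥ (Lp t *ᵥ a0 + Lm t *ᵥ b0)) ∧
      w2 t = (1 / 2 : ℝ) • (U *ᵥ (Lm t *ᵥ a0 + Lp t *ᵥ b0)) - (U *ᵥ b0) + w2 0 := by
  intro t
  induction t with
  | zero =>
    constructor
    · rw [hLp0, hLm0, Matrix.zero_mulVec, Matrix.add_mulVec, Matrix.one_mulVec, add_zero,
        Matrix.mulVec_add, ha0, Matrix.mulVec_mulVec, hV', Matrix.one_mulVec]
      module
    · rw [hLp0, hLm0, Matrix.zero_mulVec, Matrix.add_mulVec, Matrix.one_mulVec, zero_add,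
        Matrix.mulVec_add]
      module
  | succ t ih =>
    obtain ⟨ih1, ih2⟩ := ih
    have hUw2 : Uᵀ *ᵥ w2 t = (1 / 2 : ℝ) • (Lm t *ᵥ a0 + Lp t *ᵥ b0) := by
      rw [ih2, Matrix.mulVec_add, Matrix.mulVec_sub, Matrix.mulVec_smul,
        Matrix.mulVec_mulVec, Matrix.mulVec_mulVec, hU, ← hb0]
      simp only [Matrix.one_mulVec]
      module
    have hVw1 : Vᵀ *ᵥ w1 t = (1 / 2 : ℝ) • (Lp t *ᵥ a0 + Lm t *ᵥ b0) := by
      rw [ih1, Matrix.mulVec_smul, Matrix.mulVec_mulVec, hV, Matrix.one_mulVec]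
    constructor
    · rw [hrec1, ih1, hMT]
      have h1 : (V * S * Uᵀ) *ᵥ w2 t = V *ᵥ (S *ᵥ (Uᵀ *ᵥ w2 t)) := by
        rw [Matrix.mulVec_mulVec, Matrix.mulVec_mulVec]
      rw [h1, hUw2, hLp t, hLm t]
      simp only [Matrix.add_mulVec, Matrix.smul_mulVec, ← Matrix.mulVec_mulVec,
        Matrix.mulVec_add, Matrix.mulVec_smul]
      module
    · rw [hrec2, ih2, hM]
      have h1 : (U * S * Vᵀ) *ᵥ w1 t = U *ᵥ (S *ᵥ (Vᵀ *ᵥ w1 t)) := by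
        rw [Matrix.mulVec_mulVec, Matrix.mulVec_mulVec]
      rw [h1, hVw1, hLp t, hLm t]
      simp only [Matrix.add_mulVec, Matrix.smul_mulVec, ← Matrix.mulVec_mulVec,
        Matrix.mulVec_add, Matrix.mulVec_smul]
      module

theorem stmt_1 (d k : ℕ) (hkd : k ≤ d) (α : ℝ) (hα : 0 < α)
    (M : Matrix (Fin d) (Fin k) ℝ) (U : Matrix (Fin d) (Fin k) ℝ)
    (σ : Fin k → ℝ) (V : Matrix (Fin k) (Fin k) ℝ)
    (hSVD : M = U * Matrix.diagonal σ * Vᵀ)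
    (hU : Uᵀ * U = 1) (hV : Vᵀ * V = 1) (hV' : V * Vᵀ = 1)
    (w1 : ℕ → Fin k → ℝ) (w2 : ℕ → Fin d → ℝ)
    (hrec1 : ∀ t : ℕ, w1 (t + 1) = w1 t + α • (Mᵀ *ᵥ w2 t))
    (hrec2 : ∀ t : ℕ, w2 (t + 1) = w2 t + α • (M *ᵥ w1 t)) :
    let S : Matrix (Fin k) (Fin k) ℝ := Matrix.diagonal σ
    let Λp : ℕ → Matrix (Fin k) (Fin k) ℝ := fun t => (1 + α • S) ^ t + (1 - α • S) ^ t
    let Λm : ℕ → Matrix (Fin k) (Fin k) ℝ := fun t => (1 + α • S) ^ t - (1 - α • S) ^ t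
    (∀ t : ℕ, w1 t = (1 / 2 : ℝ) • (V *ᵥ (Λp t *ᵥ (Vᵀ *ᵥ w1 0) + Λm t *ᵥ (Uᵀ *ᵥ w2 0)))) ∧
    (∀ t : ℕ, w2 t = (1 / 2 : ℝ) • (U *ᵥ (Λm t *ᵥ (Vᵀ *ᵥ w1 0) + Λp t *ᵥ (Uᵀ *ᵥ w2 0)))
        - (U *ᵥ (Uᵀ *ᵥ w2 0)) + w2 0) := by
  intro S Λp Λm
  have hMT : Mᵀ = V * S * Uᵀ := by
    rw [hSVD]
    simp [Matrix.transpose_mul, Matrix.diagonal_transpose, Matrix.mul_assoc, S]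
  have hcP : Commute S (1 + α • S) := by
    show S * (1 + α • S) = (1 + α • S) * S
    simp [mul_add, add_mul, mul_smul_comm, smul_mul_assoc]
  have hcQ : Commute S (1 - α • S) := by
    show S * (1 - α • S) = (1 - α • S) * S
    simp [mul_sub, sub_mul, mul_smul_comm, smul_mul_assoc]
  have hΛp : ∀ t, Λp (t + 1) = Λp t + α • (S * Λm t) := by
    intro t
    have h1 := (hcP.pow_right t).eq
    have h2 := (hcQ.pow_right t).eq
    show (1 + α • S) ^ (t+1) + (1 - α • S) ^ (t+1)
        = ((1 + α • S) ^ t + (1 - α • S) ^ t)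
          + α • (S * ((1 + α • S) ^ t - (1 - α • S) ^ t))
    rw [pow_succ, pow_succ, mul_add, mul_sub, mul_one, mul_one,
      mul_smul_comm, mul_smul_comm, ← h1, ← h2, mul_sub]
    module
  have hΛm : ∀ t, Λm (t + 1) = Λm t + α • (S * Λp t) := by
    intro t
    have h1 := (hcP.pow_right t).eq
    have h2 := (hcQ.pow_right t).eq
    show (1 + α • S) ^ (t+1) - (1 - α • S) ^ (t+1)
        = ((1 + α • S) ^ t - (1 - α • S) ^ t)
          + α • (S * ((1 + α • S) ^ t + (1 - α • S) ^ t))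
    rw [pow_succ, pow_succ, mul_add, mul_sub, mul_one, mul_one,
      mul_smul_comm, mul_smul_comm, ← h1, ← h2, mul_add]
    module
  have key := stmt_1_aux d k α M U V S hMT hSVD hU hV hV' w1 w2 hrec1 hrec2
    Λp Λm (by show _ ^ 0 + _ ^ 0 = 1 + 1; simp) (by show _ ^ 0 - _ ^ 0 = 0; simp)
    hΛp hΛm (Vᵀ *ᵥ w1 0) (Uᵀ *ᵥ w2 0) rfl rfl
  exact ⟨fun t => (key t).1, fun t => (key t).2⟩
end

section
/- Let M ∈ ℝ^{d×k} have SVD M = UΣV^T (U^TU = V^TV = VV^T = I_k) with singular values σ_1 ≥ ... ≥ σ_k ≥ 0, σ_1 > 0, and let m be the largest index with σ_m = σ_1. Consider the recursion w_1^{t+1} = w_1^t + αM^T w_2^t, w_2^{t+1} = w_2^t + αM w_1^t with w_2^0 = 0 and α > 0. Then lim_{t→∞} 2w_1^t/(1+ασ_1)^t = V_{:m}V_{:m}^T w_1^0 and lim_{t→∞} 2w_2^t/(1+ασ_1)^t = U_{:m}V_{:m}^T w_1^0, where A_{:m} denotes the first m columns of A. -/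
open Matrix Filter

private lemma sum_castLE_eq {k m : ℕ} (hm : 0 < m) (hmk : m ≤ k) (f : Fin k → ℝ) :
    ∑ p : Fin m, f (Fin.castLE hmk p)
      = ∑ i : Fin k, (if (i : ℕ) < m then f i else 0) := by
  classical
  rw [← Finset.sum_filter]
  refine Finset.sum_nbij' (fun p => Fin.castLE hmk p)
    (fun i => if h : (i : ℕ) < m then ⟨i, h⟩ else ⟨0, hm⟩) ?_ ?_ ?_ ?_ ?_
  · intro p _
    simp only [Finset.mem_filter, Finset.mem_univ, true_and, Fin.coe_castLE]
    exact p.isLt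
  · intro i _; exact Finset.mem_univ _
  · intro p _
    simp [p.isLt]
  · intro i hi
    simp only [Finset.mem_filter, Finset.mem_univ, true_and] at hi
    simp only [hi, dif_pos]
    rfl
  · intro p _; rfl

theorem stmt_3 (d k m : ℕ) (hkd : k ≤ d) (hk : 0 < k) (hm : 0 < m) (hmk : m ≤ k)
    (α : ℝ) (hα : 0 < α)
    (M : Matrix (Fin d) (Fin k) ℝ) (U : Matrix (Fin d) (Fin k) ℝ)
    (σ : Fin k → ℝ) (V : Matrix (Fin k) (Fin k) ℝ)
    (hSVD : M = U * Matrix.diagonal σ * Vᵀ)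
    (hU : Uᵀ * U = 1) (hV : Vᵀ * V = 1) (hV' : V * Vᵀ = 1)
    (hmono : ∀ i j : Fin k, i ≤ j → σ j ≤ σ i) (hnn : ∀ i, 0 ≤ σ i)
    (hσ1 : 0 < σ ⟨0, hk⟩)
    (htop : ∀ i : Fin k, σ i = σ ⟨0, hk⟩ ↔ (i : ℕ) < m)
    (w1 : ℕ → Fin k → ℝ) (w2 : ℕ → Fin d → ℝ)
    (hinit : w2 0 = 0)
    (hrec1 : ∀ t : ℕ, w1 (t + 1) = w1 t + α • (Mᵀ *ᵥ w2 t))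
    (hrec2 : ∀ t : ℕ, w2 (t + 1) = w2 t + α • (M *ᵥ w1 t)) :
    let Vm : Matrix (Fin k) (Fin m) ℝ := V.submatrix id (Fin.castLE hmk)
    let Um : Matrix (Fin d) (Fin m) ℝ := U.submatrix id (Fin.castLE hmk)
    Tendsto (fun t : ℕ => (2 / (1 + α * σ ⟨0, hk⟩) ^ t) • w1 t) atTop
      (nhds (Vm *ᵥ (Vmᵀ *ᵥ w1 0))) ∧
    Tendsto (fun t : ℕ => (2 / (1 + α * σ ⟨0, hk⟩) ^ t) • w2 t) atTop
      (nhds (Um *ᵥ (Vmᵀ *ᵥ w1 0))) := by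
  intro Vm Um
  set σ0 : ℝ := σ ⟨0, hk⟩ with hσ0
  set ρ : ℝ := 1 + α * σ0 with hρdef
  have hρ1 : 1 < ρ := by nlinarith
  have hρ0 : 0 < ρ := by linarith
  -- singular values bounded by σ0
  have hle : ∀ i : Fin k, σ i ≤ σ0 := fun i => hmono ⟨0, hk⟩ i (Fin.mk_le_of_le_val (Nat.zero_le _))
  set c : Fin k → ℝ := fun i => (Vᵀ *ᵥ w1 0) i with hc
  set A : ℕ → Fin k → ℝ :=
    fun t i => c i * ((1 + α * σ i) ^ t + (1 - α * σ i) ^ t) / 2 with hA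
  set Y : ℕ → Fin k → ℝ :=
    fun t i => c i * ((1 + α * σ i) ^ t - (1 - α * σ i) ^ t) / 2 with hY
  have hMT : Mᵀ = V * Matrix.diagonal σ * Uᵀ := by
    rw [hSVD]
    simp [Matrix.transpose_mul, Matrix.diagonal_transpose, Matrix.mul_assoc]
  -- closed form for the recursion
  have hdiag : ∀ x : Fin k → ℝ, Matrix.diagonal σ *ᵥ x = fun i => σ i * x i := by
    intro x; funext i; rw [Matrix.mulVec_diagonal]
  have key : ∀ t, w1 t = V *ᵥ A t ∧ w2 t = U *ᵥ Y t := by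
    intro t
    induction t with
    | zero =>
      constructor
      · have hA0 : A 0 = Vᵀ *ᵥ w1 0 := by
          funext i; simp only [hA, hc, pow_zero]; ring
        rw [hA0, Matrix.mulVec_mulVec, hV', Matrix.one_mulVec]
      · have hY0 : Y 0 = 0 := by funext i; simp [hY]
        rw [hY0, Matrix.mulVec_zero, hinit]
    | succ t ih =>
      obtain ⟨ih1, ih2⟩ := ih
      have hMv : M *ᵥ w1 t = U *ᵥ (fun i => σ i * A t i) := by
        rw [ih1, Matrix.mulVec_mulVec, hSVD, Matrix.mul_assoc, Matrix.mul_assoc, hV,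
          Matrix.mul_one, ← Matrix.mulVec_mulVec, hdiag]
      have hMTv : Mᵀ *ᵥ w2 t = V *ᵥ (fun i => σ i * Y t i) := by
        rw [ih2, Matrix.mulVec_mulVec, hMT, Matrix.mul_assoc, Matrix.mul_assoc, hU,
          Matrix.mul_one, ← Matrix.mulVec_mulVec, hdiag]
      have hAstep : A (t + 1) = A t + α • (fun i => σ i * Y t i) := by
        funext i
        simp only [hA, hY, Pi.add_apply, Pi.smul_apply, smul_eq_mul, pow_succ]
        ring
      have hYstep : Y (t + 1) = Y t + α • (fun i => σ i * A t i) := by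
        funext i
        simp only [hA, hY, Pi.add_apply, Pi.smul_apply, smul_eq_mul, pow_succ]
        ring
      constructor
      · rw [hrec1, ih1, hMTv, hAstep, Matrix.mulVec_add, Matrix.mulVec_smul]
      · rw [hrec2, ih2, hMv, hYstep, Matrix.mulVec_add, Matrix.mulVec_smul]
  -- limit vector
  set L : Fin k → ℝ := fun i => if (i : ℕ) < m then c i else 0 with hL
  have hr2 : ∀ i : Fin k, |(1 - α * σ i) / ρ| < 1 := by
    intro i
    rw [abs_div, abs_of_pos hρ0, div_lt_one hρ0]
    have h1 := hnn i
    have h2 := hle i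
    rw [abs_lt]
    constructor <;> nlinarith
  have hr1 : ∀ i : Fin k, ¬ ((i : ℕ) < m) → |(1 + α * σ i) / ρ| < 1 := by
    intro i hi
    have hlt : σ i < σ0 := lt_of_le_of_ne (hle i) (fun h => hi ((htop i).mp h))
    rw [abs_div, abs_of_pos hρ0, div_lt_one hρ0]
    have h1 := hnn i
    rw [abs_lt]
    constructor <;> nlinarith
  -- component-wise limits
  have hAlim : Tendsto (fun t : ℕ => fun i => (2 / ρ ^ t) * A t i) atTop (nhds L) := by
    rw [tendsto_pi_nhds]
    intro i
    have heq : ∀ t : ℕ, (2 / ρ ^ t) * A t i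
        = c i * (((1 + α * σ i) / ρ) ^ t + ((1 - α * σ i) / ρ) ^ t) := by
      intro t
      have hρt : (ρ : ℝ) ^ t ≠ 0 := pow_ne_zero _ (ne_of_gt hρ0)
      simp only [hA, div_pow]
      field_simp
    simp only [heq]
    by_cases hi : (i : ℕ) < m
    · have hσi : σ i = σ0 := (htop i).mpr hi
      have h1 : ((1 + α * σ i) / ρ) = 1 := by
        rw [hσi]; field_simp; rfl
      have : Tendsto (fun t : ℕ => c i * (((1 + α * σ i) / ρ) ^ t + ((1 - α * σ i) / ρ) ^ t))
          atTop (nhds (c i * (1 + 0))) := by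
        refine Tendsto.const_mul _ (Tendsto.add ?_ (tendsto_pow_atTop_nhds_zero_of_abs_lt_one (hr2 i)))
        rw [h1]
        exact tendsto_const_nhds.congr fun t => (one_pow t).symm
      rw [show L i = c i from by simp only [hL]; rw [if_pos hi]]
      simpa using this
    · have : Tendsto (fun t : ℕ => c i * (((1 + α * σ i) / ρ) ^ t + ((1 - α * σ i) / ρ) ^ t))
          atTop (nhds (c i * (0 + 0))) := by
        exact Tendsto.const_mul _ (Tendsto.add
          (tendsto_pow_atTop_nhds_zero_of_abs_lt_one (hr1 i hi))
          (tendsto_pow_atTop_nhds_zero_of_abs_lt_one (hr2 i)))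
      rw [show L i = 0 from by simp only [hL]; rw [if_neg hi]]
      simpa using this
  have hYlim : Tendsto (fun t : ℕ => fun i => (2 / ρ ^ t) * Y t i) atTop (nhds L) := by
    rw [tendsto_pi_nhds]
    intro i
    have heq : ∀ t : ℕ, (2 / ρ ^ t) * Y t i
        = c i * (((1 + α * σ i) / ρ) ^ t - ((1 - α * σ i) / ρ) ^ t) := by
      intro t
      have hρt : (ρ : ℝ) ^ t ≠ 0 := pow_ne_zero _ (ne_of_gt hρ0)
      simp only [hY, div_pow]
      field_simp
    simp only [heq]
    by_cases hi : (i : ℕ) < m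
    · have hσi : σ i = σ0 := (htop i).mpr hi
      have h1 : ((1 + α * σ i) / ρ) = 1 := by
        rw [hσi]; field_simp; rfl
      have : Tendsto (fun t : ℕ => c i * (((1 + α * σ i) / ρ) ^ t - ((1 - α * σ i) / ρ) ^ t))
          atTop (nhds (c i * (1 - 0))) := by
        refine Tendsto.const_mul _ (Tendsto.sub ?_ (tendsto_pow_atTop_nhds_zero_of_abs_lt_one (hr2 i)))
        rw [h1]
        exact tendsto_const_nhds.congr fun t => (one_pow t).symm
      rw [show L i = c i from by simp only [hL]; rw [if_pos hi]]
      simpa using this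
    · have : Tendsto (fun t : ℕ => c i * (((1 + α * σ i) / ρ) ^ t - ((1 - α * σ i) / ρ) ^ t))
          atTop (nhds (c i * (0 - 0))) := by
        exact Tendsto.const_mul _ (Tendsto.sub
          (tendsto_pow_atTop_nhds_zero_of_abs_lt_one (hr1 i hi))
          (tendsto_pow_atTop_nhds_zero_of_abs_lt_one (hr2 i)))
      rw [show L i = 0 from by simp only [hL]; rw [if_neg hi]]
      simpa using this
  -- identify limit vectors
  have hVL : V *ᵥ L = Vm *ᵥ (Vmᵀ *ᵥ w1 0) := by
    funext j
    show ∑ i, V j i * L i = ∑ p, Vm j p * (Vmᵀ *ᵥ w1 0) p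
    have hcp : ∀ p : Fin m, (Vmᵀ *ᵥ w1 0) p = c (Fin.castLE hmk p) := by
      intro p
      simp only [hc, Matrix.mulVec, dotProduct, Matrix.transpose_apply,
        Matrix.submatrix_apply, id]
      rfl
    calc ∑ i, V j i * L i
        = ∑ i : Fin k, (if (i : ℕ) < m then V j i * c i else 0) := by
          apply Finset.sum_congr rfl
          intro i _
          simp only [hL]
          split <;> simp
      _ = ∑ p : Fin m, V j (Fin.castLE hmk p) * c (Fin.castLE hmk p) :=
          (sum_castLE_eq hm hmk (fun i => V j i * c i)).symm
      _ = ∑ p, Vm j p * (Vmᵀ *ᵥ w1 0) p := by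
          apply Finset.sum_congr rfl
          intro p _
          rw [hcp]
          rfl
  have hUL : U *ᵥ L = Um *ᵥ (Vmᵀ *ᵥ w1 0) := by
    funext j
    show ∑ i, U j i * L i = ∑ p, Um j p * (Vmᵀ *ᵥ w1 0) p
    have hcp : ∀ p : Fin m, (Vmᵀ *ᵥ w1 0) p = c (Fin.castLE hmk p) := by
      intro p
      simp only [hc, Matrix.mulVec, dotProduct, Matrix.transpose_apply,
        Matrix.submatrix_apply, id]
      rfl
    calc ∑ i, U j i * L i
        = ∑ i : Fin k, (if (i : ℕ) < m then U j i * c i else 0) := by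
          apply Finset.sum_congr rfl
          intro i _
          simp only [hL]
          split <;> simp
      _ = ∑ p : Fin m, U j (Fin.castLE hmk p) * c (Fin.castLE hmk p) :=
          (sum_castLE_eq hm hmk (fun i => U j i * c i)).symm
      _ = ∑ p, Um j p * (Vmᵀ *ᵥ w1 0) p := by
          apply Finset.sum_congr rfl
          intro p _
          rw [hcp]
          rfl
  have hcontV : Continuous (fun v : Fin k → ℝ => V *ᵥ v) := by
    have := LinearMap.continuous_of_finiteDimensional (Matrix.mulVecLin V)
    exact this
  have hcontU : Continuous (fun v : Fin k → ℝ => U *ᵥ v) := by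
    have := LinearMap.continuous_of_finiteDimensional (Matrix.mulVecLin U)
    exact this
  constructor
  · have h1 : Tendsto (fun t : ℕ => V *ᵥ (fun i => (2 / ρ ^ t) * A t i)) atTop
        (nhds (V *ᵥ L)) := (hcontV.tendsto L).comp hAlim
    rw [hVL] at h1
    have hfun : ∀ t : ℕ, (2 / ρ ^ t) • w1 t = V *ᵥ (fun i => (2 / ρ ^ t) * A t i) := by
      intro t
      rw [(key t).1, ← Matrix.mulVec_smul]
      rfl
    simpa only [hfun] using h1
  · have h1 : Tendsto (fun t : ℕ => U *ᵥ (fun i => (2 / ρ ^ t) * Y t i)) atTop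
        (nhds (U *ᵥ L)) := (hcontU.tendsto L).comp hYlim
    rw [hUL] at h1
    have hfun : ∀ t : ℕ, (2 / ρ ^ t) • w2 t = U *ᵥ (fun i => (2 / ρ ^ t) * Y t i) := by
      intro t
      rw [(key t).2, ← Matrix.mulVec_smul]
      rfl
    simpa only [hfun] using h1
end

section
/- Let B ∈ ℝ^{d×k} be a nonnegative matrix such that every column has at least one strictly positive entry, and such that for every 1 ≤ j < k, columns j and j+1 share a common row index at which both entries are strictly positive. Then the matrix A = B^TB ∈ ℝ^{k×k} is primitive: there exists t ≥ 1 such that all entries of A^t are strictly positive. -/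
open Matrix

theorem stmt_8 (d k : ℕ) (B : Matrix (Fin d) (Fin k) ℝ)
    (hnn : ∀ i j, 0 ≤ B i j)
    (hcol : ∀ j : Fin k, ∃ i : Fin d, 0 < B i j)
    (hadj : ∀ j : Fin k, (hj : (j : ℕ) + 1 < k) →
      ∃ i : Fin d, 0 < B i j ∧ 0 < B i ⟨(j : ℕ) + 1, hj⟩) :
    ∃ t : ℕ, 0 < t ∧ ∀ i j : Fin k, 0 < ((Bᵀ * B) ^ t) i j := by
  set A := Bᵀ * B with hA
  have hAapp : ∀ a b, A a b = ∑ i, B i a * B i b := by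
    intro a b; simp [hA, Matrix.mul_apply]
  have hAnn : ∀ a b, 0 ≤ A a b := by
    intro a b; rw [hAapp]
    exact Finset.sum_nonneg fun i _ => mul_nonneg (hnn i a) (hnn i b)
  have hdiag : ∀ a, 0 < A a a := by
    intro a
    obtain ⟨i, hi⟩ := hcol a
    rw [hAapp]
    exact Finset.sum_pos' (fun i _ => mul_nonneg (hnn i a) (hnn i a))
      ⟨i, Finset.mem_univ i, mul_pos hi hi⟩
  have hadjA : ∀ (a : Fin k) (ha : (a : ℕ) + 1 < k),
      0 < A a ⟨(a : ℕ) + 1, ha⟩ ∧ 0 < A ⟨(a : ℕ) + 1, ha⟩ a := by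
    intro a ha
    obtain ⟨i, h1, h2⟩ := hadj a ha
    constructor <;> rw [hAapp] <;>
      exact Finset.sum_pos' (fun i _ => mul_nonneg (hnn _ _) (hnn _ _))
        ⟨i, Finset.mem_univ i, mul_pos (by assumption) (by assumption)⟩
  have hpow : ∀ t (a b : Fin k), 0 ≤ (A ^ t) a b := by
    intro t
    induction t with
    | zero =>
      intro a b
      simp only [pow_zero, Matrix.one_apply]
      split <;> norm_num
    | succ n ih =>
      intro a b
      rw [pow_succ, Matrix.mul_apply]
      exact Finset.sum_nonneg fun l _ => mul_nonneg (ih a l) (hAnn l b)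
  have claim : ∀ t (i j : Fin k), (i : ℕ) - j + ((j : ℕ) - i) ≤ t →
      0 < (A ^ (t + 1)) i j := by
    intro t
    induction t with
    | zero =>
      intro i j h
      have : i = j := Fin.ext (by omega)
      subst this
      simpa using hdiag i
    | succ n ih =>
      intro i j h
      rw [pow_succ', Matrix.mul_apply]
      rcases lt_trichotomy (i : ℕ) (j : ℕ) with hlt | heq | hgt
      · have hib : (i : ℕ) + 1 < k := by
          have := j.isLt; omega
        refine Finset.sum_pos' (fun l _ => mul_nonneg (hAnn _ _) (hpow _ _ _))
          ⟨⟨(i : ℕ) + 1, hib⟩, Finset.mem_univ _,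
            mul_pos (hadjA i hib).1 (ih _ j (by simp; omega))⟩
      · have : i = j := Fin.ext heq
        subst this
        refine Finset.sum_pos' (fun l _ => mul_nonneg (hAnn _ _) (hpow _ _ _))
          ⟨i, Finset.mem_univ _, mul_pos (hdiag i) (ih i i (by simp))⟩
      · have hib : (i : ℕ) - 1 + 1 < k := by
          have := i.isLt; omega
        have hpos : 0 < A i ⟨(i : ℕ) - 1, by omega⟩ := by
          have h2 := (hadjA ⟨(i : ℕ) - 1, by omega⟩ hib).2
          have hi' : (⟨(i : ℕ) - 1 + 1, hib⟩ : Fin k) = i := Fin.ext (by simp; omega)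
          rwa [hi'] at h2
        refine Finset.sum_pos' (fun l _ => mul_nonneg (hAnn _ _) (hpow _ _ _))
          ⟨⟨(i : ℕ) - 1, by omega⟩, Finset.mem_univ _,
            mul_pos hpos (ih _ j (by simp; omega))⟩
  exact ⟨k + 1, Nat.succ_pos k, fun i j =>
    claim k i j (by have := i.isLt; have := j.isLt; omega)⟩
end

section
/- Fix d, k, and a finite set S ⊆ {1,...,d}. Suppose each element of S is ≥ k and any two distinct elements of S differ by at least 2k. Define M ∈ ℝ^{d×k} by M_{i,j} = (1/|S|)·[i+j-1 ∈ S] (indicator, averaged). Then M^TM = (1/|S|)·I_k. -/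
open Matrix

theorem stmt_9 (d k : ℕ) (hk : 0 < k) (S : Finset ℕ) (hSne : S.Nonempty)
    (hSsub : ∀ l ∈ S, 1 ≤ l ∧ l ≤ d)
    (hge : ∀ l ∈ S, k ≤ l)
    (hsep : ∀ l ∈ S, ∀ l' ∈ S, l ≠ l' → 2 * k ≤ ((l : ℤ) - l').natAbs) :
    let M : Matrix (Fin d) (Fin k) ℝ :=
      fun i j => (1 / (S.card : ℝ)) * (if (i : ℕ) + (j : ℕ) + 1 ∈ S then 1 else 0)
    Mᵀ * M = (1 / (S.card : ℝ)) • (1 : Matrix (Fin k) (Fin k) ℝ) := by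
  intro M
  have hc : (S.card : ℝ) ≠ 0 := by
    have := Finset.card_pos.mpr hSne
    positivity
  ext j j'
  rw [Matrix.mul_apply]; simp only [Matrix.transpose_apply]
  simp only [Matrix.mul_apply, Matrix.transpose_apply, Matrix.smul_apply,
    Matrix.one_apply, smul_eq_mul, M]
  have step : ∀ i : Fin d,
      (1 / (S.card : ℝ) * (if (i : ℕ) + (j : ℕ) + 1 ∈ S then 1 else 0)) *
      (1 / (S.card : ℝ) * (if (i : ℕ) + (j' : ℕ) + 1 ∈ S then 1 else 0))
      = (1 / (S.card : ℝ))^2 *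
        (if (i : ℕ) + (j : ℕ) + 1 ∈ S ∧ (i : ℕ) + (j' : ℕ) + 1 ∈ S then 1 else 0) := by
    intro i
    by_cases h1 : (i : ℕ) + (j : ℕ) + 1 ∈ S <;>
      by_cases h2 : (i : ℕ) + (j' : ℕ) + 1 ∈ S <;>
      simp [h1, h2] <;> ring
  rw [Finset.sum_congr rfl (fun i _ => step i), ← Finset.mul_sum, Finset.sum_boole]
  by_cases hjj : j = j'
  · subst hjj
    have hcard : (Finset.univ.filter
        (fun i : Fin d => (i : ℕ) + (j : ℕ) + 1 ∈ S ∧ (i : ℕ) + (j : ℕ) + 1 ∈ S)).card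
        = S.card := by
      refine Finset.card_bij (fun i _ => (i : ℕ) + (j : ℕ) + 1) ?_ ?_ ?_
      · intro a ha
        exact (Finset.mem_filter.mp ha).2.1
      · intro a ha b hb hab
        exact Fin.ext (by omega)
      · intro l hl
        have h1 := hSsub l hl
        have h2 := hge l hl
        have hjk : (j : ℕ) < k := j.isLt
        refine ⟨⟨l - j - 1, by omega⟩, ?_, by simp; omega⟩
        simp only [Finset.mem_filter, Finset.mem_univ, true_and]
        have : l - (j : ℕ) - 1 + (j : ℕ) + 1 = l := by omega
        rw [this]
        exact ⟨hl, hl⟩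
    rw [hcard]
    field_simp
    simp
  · have hempty : (Finset.univ.filter
        (fun i : Fin d => (i : ℕ) + (j : ℕ) + 1 ∈ S ∧ (i : ℕ) + (j' : ℕ) + 1 ∈ S)) = ∅ := by
      apply Finset.filter_false_of_mem
      rintro i - ⟨h1, h2⟩
      have hne : (i : ℕ) + (j : ℕ) + 1 ≠ (i : ℕ) + (j' : ℕ) + 1 := by
        intro h; apply hjj; exact Fin.ext (by omega)
      have := hsep _ h1 _ h2 hne
      have hjk : (j : ℕ) < k := j.isLt
      have hjk' : (j' : ℕ) < k := j'.isLt
      omega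
    rw [hempty]
    simp [hjj]
end
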